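/- Let V be a finite-dimensional real vector space and let P, P' : V* → V be skew-symmetric linear maps. Suppose α, β ∈ V* and λ, μ ∈ ℝ satisfy P'α = λ Pα, P'β = μ Pβ, and λ ≠ μ. Then ⟨α, Pβ⟩ = 0 and ⟨α, P'β⟩ = 0. (This is the key step in the proof of Theorem 2.6: functions whose differentials are eigencovectors of N* = P^{-1}P' relative to different eigenvalues are in involution with respect to both Poisson brackets.) -/
import Mathlib


/-- eigencovectors of `N* = P⁻¹P'` relative to different eigenvalues are in
involution with respect to both skew-symmetric structures: if `P'α = λ Pα`, `P'β = μ Pβ`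
and `λ ≠ μ`, then `⟨α, Pβ⟩ = 0` and `⟨α, P'β⟩ = 0`. -/
theorem stmt_3 (V : Type*) [AddCommGroup V] [Module ℝ V] [FiniteDimensional ℝ V]
    (P P' : Module.Dual ℝ V →ₗ[ℝ] V)
    (hP : ∀ α β : Module.Dual ℝ V, α (P β) = -(β (P α)))
    (hP' : ∀ α β : Module.Dual ℝ V, α (P' β) = -(β (P' α)))
    (α β : Module.Dual ℝ V) (lam mu : ℝ)
    (hα : P' α = lam • (P α)) (hβ : P' β = mu • (P β)) (hne : lam ≠ mu) :
    α (P β) = 0 ∧ α (P' β) = 0 := by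
  have h1 : α (P' β) = mu * α (P β) := by rw [hβ]; simp
  have h2 : α (P' β) = lam * α (P β) := by
    rw [hP' α β, hα]
    simp [hP α β]
  have h3 : α (P β) = 0 := by
    have := h1.symm.trans h2
    have hd : (mu - lam) * α (P β) = 0 := by ring_nf; linarith
    rcases mul_eq_zero.mp hd with h | h
    · exact absurd (by linarith : lam = mu) hne
    · exact h
  exact ⟨h3, by rw [h1, h3, mul_zero]⟩
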